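/- Let Φ_h be the Störmer–Verlet map for the harmonic oscillator with ω > 0 and step size h satisfying 0 < hω < 2. Then the quadratic form Ẽ(q,p) = (p² + ω²q²)/2 - (h²ω²/4)·(ω²q²/2) (a modified energy) is exactly conserved by Φ_h: Ẽ(Φ_h(q,p)) = Ẽ(q,p) for all (q,p), and hence the Verlet iterates remain bounded for all k. -/
import Mathlib


/-- For `0 < hω < 2` the Störmer–Verlet map for the harmonic oscillator exactly
conserves the modified energy `Ẽ(q,p) = (p² + ω²q²)/2 - (h²ω²/4)·(ω²q²/2)`, and
hence its iterates remain bounded. -/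
theorem verlet_modified_energy_conserved (h ω : ℝ) (hω : 0 < ω)
    (hhω : 0 < h * ω) (hhω2 : h * ω < 2)
    (Φ : ℝ × ℝ → ℝ × ℝ)
    (hΦ : ∀ x : ℝ × ℝ,
      Φ x = (x.1 + h * (x.2 - (h / 2) * ω ^ 2 * x.1),
             (x.2 - (h / 2) * ω ^ 2 * x.1) -
               (h / 2) * ω ^ 2 * (x.1 + h * (x.2 - (h / 2) * ω ^ 2 * x.1))))
    (Etilde : ℝ × ℝ → ℝ)
    (hEtilde : ∀ x : ℝ × ℝ,
      Etilde x = (x.2 ^ 2 + ω ^ 2 * x.1 ^ 2) / 2 -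
        (h ^ 2 * ω ^ 2 / 4) * (ω ^ 2 * x.1 ^ 2 / 2)) :
    (∀ x : ℝ × ℝ, Etilde (Φ x) = Etilde x) ∧
    ∀ x : ℝ × ℝ, ∃ C : ℝ, ∀ k : ℕ, ‖Φ^[k] x‖ ≤ C := by
  have hcons : ∀ x : ℝ × ℝ, Etilde (Φ x) = Etilde x := by
    intro x
    rw [hΦ x, hEtilde, hEtilde]
    ring
  refine ⟨hcons, fun x => ?_⟩
  -- the modified energy is conserved along iterates
  have hiter : ∀ k : ℕ, Etilde (Φ^[k] x) = Etilde x := by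
    intro k
    induction k with
    | zero => simp
    | succ n ih => rw [Function.iterate_succ_apply', hcons, ih]
  obtain ⟨c, hc⟩ : ∃ c : ℝ, c = 1 - h ^ 2 * ω ^ 2 / 4 := ⟨_, rfl⟩
  have hc0 : 0 < c := by nlinarith [mul_lt_mul_of_pos_left hhω2 hhω]
  have hω2 : 0 < ω ^ 2 := by positivity
  obtain ⟨m, hm⟩ : ∃ m : ℝ, m = min 1 (c * ω ^ 2) := ⟨_, rfl⟩
  have hm0 : 0 < m := hm ▸ lt_min one_pos (by positivity)
  have hE0 : 0 ≤ Etilde x := by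
    rw [hEtilde]
    nlinarith [sq_nonneg x.2, mul_nonneg (mul_nonneg hc0.le hω2.le) (sq_nonneg x.1), hc]
  refine ⟨Real.sqrt (2 * Etilde x / m), fun k => ?_⟩
  obtain ⟨y, hy⟩ : ∃ y : ℝ × ℝ, y = Φ^[k] x := ⟨_, rfl⟩
  have hEy : Etilde y = Etilde x := hy ▸ hiter k
  have hEy' : (y.2 ^ 2 + ω ^ 2 * y.1 ^ 2) / 2 -
      (h ^ 2 * ω ^ 2 / 4) * (ω ^ 2 * y.1 ^ 2 / 2) = Etilde x := by
    rw [← hEtilde]; exact hEy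
  have hb0 : 0 ≤ 2 * Etilde x / m := by positivity
  have key : ∀ a : ℝ, a ^ 2 ≤ 2 * Etilde x / m → |a| ≤ Real.sqrt (2 * Etilde x / m) := by
    intro a ha
    have := Real.sqrt_le_sqrt ha
    rwa [Real.sqrt_sq_eq_abs] at this
  have h2E : 2 * Etilde x = y.2 ^ 2 + c * ω ^ 2 * y.1 ^ 2 := by
    rw [← hEy', hc]; ring
  have hq : |y.1| ≤ Real.sqrt (2 * Etilde x / m) := by
    apply key
    have hmle : m ≤ c * ω ^ 2 := hm ▸ min_le_right _ _
    rw [le_div_iff₀ hm0]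
    nlinarith [sq_nonneg y.2, mul_le_mul_of_nonneg_left hmle (sq_nonneg y.1)]
  have hp : |y.2| ≤ Real.sqrt (2 * Etilde x / m) := by
    apply key
    have hmle : m ≤ 1 := hm ▸ min_le_left _ _
    rw [le_div_iff₀ hm0]
    nlinarith [mul_nonneg (mul_nonneg hc0.le hω2.le) (sq_nonneg y.1),
      mul_le_mul_of_nonneg_left hmle (sq_nonneg y.2)]
  rw [← hy, Prod.norm_def]
  simp only [Real.norm_eq_abs]
  exact max_le hq hp
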